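/- Let q be a prime power, α ∈ F_q^{n+1} with rank H_{n₁,n₂}(α) = r, ρ(α) = r, π(α) = 0 and r ≥ 2, and let A₁, A₂ be the characteristic polynomials with deg A₂ < deg A₁ = r. Let A₁, A₂, ..., A_s, 1 be the sequence of polynomials obtained by the Euclidean algorithm applied to (A₁, A₂) (so A_{s+1} = 1 is the last nonzero remainder, valid since A₁, A₂ are coprime). Then the number of consecutive zeros at the beginning of the sequence α equals deg A_s - 1. -/

import Mathlib

open Matrix Polynomial

/-- The `l × m` Hankel matrix whose `(i,j)` entry (zero-indexed) is `α (i + j)`. -/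
def hankel (F : Type) [Field F] (l m : ℕ) (α : ℕ → F) : Matrix (Fin l) (Fin m) F :=
  Matrix.of fun i j => α (i.1 + j.1)

/-- `ρ(α)`: the largest `l ≤ n₁ = (n+2)/2` such that the top-left `l × l` Hankel matrix
of `α` is invertible (`0` if none exists). -/
noncomputable def rhoC (F : Type) [Field F] (n : ℕ) (α : ℕ → F) : ℕ :=
  sSup {l | l ≤ (n + 2) / 2 ∧ (hankel F l l α).det ≠ 0}

/-- `π(α) = rank H_{n₁,n₂}(α) - ρ(α)`. -/
noncomputable def piC (F : Type) [Field F] (n : ℕ) (α : ℕ → F) : ℕ :=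
  (hankel F ((n + 2) / 2) ((n + 3) / 2) α).rank - rhoC F n α

/-- `deg B ≤ k` for an integer bound `k` (so `k < 0` forces `B = 0`). -/
def degLE (F : Type) [Field F] (B : Polynomial F) (k : ℤ) : Prop :=
  ∀ i : ℕ, k < (i : ℤ) → B.coeff i = 0

/-- `A₁, A₂` are characteristic polynomials for the sequence `α` (of length `n+1`) with
first characteristic degree `c₁ = r` and second characteristic degree `c₂ = n+2-r`:
the kernels of all the Hankel matrices `H_{l,m}(α)`, `l+m-2 = n`, consist exactly of the
(coefficient vectors of) polynomials `B₁A₁ + B₂A₂` with `deg B₁ ≤ m - c₁ - 1` and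
`deg B₂ ≤ m - c₂ - 1`. -/
def IsCharSeq (F : Type) [Field F] (n r : ℕ) (A₁ A₂ : Polynomial F) (α : ℕ → F) : Prop :=
  ∀ l m : ℕ, 1 ≤ l → 1 ≤ m → l + m = n + 2 →
    {v : Fin m → F | (hankel F l m α).mulVec v = 0} =
    {v : Fin m → F | ∃ B₁ B₂ : Polynomial F,
      degLE F B₁ ((m : ℤ) - r - 1) ∧ degLE F B₂ ((m : ℤ) - ((n : ℤ) + 2 - r) - 1) ∧
      v = fun i : Fin m => (B₁ * A₁ + B₂ * A₂).coeff (i : ℕ)}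

/-- A sequence `α ∈ F^{n+1}` viewed as a function `ℕ → F` (zero beyond index `n`). -/
def extSeq (F : Type) [Field F] (n : ℕ) (α : Fin (n + 1) → F) : ℕ → F :=
  fun i => if h : i < n + 1 then α ⟨i, h⟩ else 0

/-- The extension of a sequence of length `n+1` by a new entry `c` at index `n+1`. -/
def extendSeq (F : Type) [Field F] (n : ℕ) (α : ℕ → F) (c : F) : ℕ → F :=
  fun i => if i = n + 1 then c else α i

private lemma degLE_of_natDegree_le (F : Type) [Field F] (B : Polynomial F) (k : ℤ)
    (h : (B.natDegree : ℤ) ≤ k) : degLE F B k := fun i hi =>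
  Polynomial.coeff_eq_zero_of_natDegree_lt (by exact_mod_cast lt_of_le_of_lt h hi)

private lemma natDegree_le_of_degLE (F : Type) [Field F] (B : Polynomial F) (k : ℤ)
    (hk : 0 ≤ k) (h : degLE F B k) : (B.natDegree : ℤ) ≤ k := by
  by_contra hcon
  push_neg at hcon
  by_cases hB : B = 0
  · rw [hB, Polynomial.natDegree_zero] at hcon
    push_cast at hcon
    omega
  · exact hB (Polynomial.leadingCoeff_eq_zero.mp (h B.natDegree hcon))

/-- if `α` is quasi-regular of rank `r ≥ 2` with characteristic polynomials
`A 1, A 2` (`deg (A 2) < deg (A 1) = r`), and `A 1, A 2, …, A s, A (s+1)` is the remainder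
sequence of the Euclidean algorithm with `A (s+1)` the final (nonzero constant) remainder,
then the number of consecutive zeros at the beginning of `α` is exactly `deg (A s) - 1`. -/
theorem stmt_10 (F : Type) [Field F] [Fintype F] (n r s : ℕ) (α : ℕ → F)
    (A : ℕ → Polynomial F)
    (hr : 2 ≤ r) (hs : 2 ≤ s)
    (hrank : (hankel F ((n + 2) / 2) ((n + 3) / 2) α).rank = r)
    (hρ : rhoC F n α = r) (hπ : piC F n α = 0)
    (hcop : IsCoprime (A 1) (A 2))
    (hd1 : (A 1).natDegree = r) (hd2 : (A 2).degree < (A 1).degree)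
    (hchar : IsCharSeq F n r (A 1) (A 2) α)
    (hrec : ∀ i : ℕ, 1 ≤ i → i ≤ s - 1 → A (i + 2) = A i % A (i + 1))
    (hAs : 1 ≤ (A s).natDegree)
    (hlast : (A (s + 1)).degree = 0) :
    (∀ i : ℕ, i < (A s).natDegree - 1 → α i = 0) ∧ α ((A s).natDegree - 1) ≠ 0 := by
  classical
  have hA1ne : A 1 ≠ 0 := by
    intro h
    rw [h, Polynomial.natDegree_zero] at hd1
    omega
  have h2r : 2 * r ≤ n + 2 := by
    have h1 := Matrix.rank_le_card_height (hankel F ((n + 2) / 2) ((n + 3) / 2) α)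
    rw [hrank, Fintype.card_fin] at h1
    omega
  -- all the `A i`, `1 ≤ i ≤ s+1`, are nonzero
  have hAneK : ∀ k i : ℕ, 1 ≤ i → i + k = s + 1 → A i ≠ 0 := by
    intro k
    induction k using Nat.strong_induction_on with
    | _ k ih =>
      intro i hi hik
      rcases k with _ | _ | k
      · have : i = s + 1 := by omega
        subst this
        intro h
        rw [h, Polynomial.degree_zero] at hlast
        simp at hlast
      · have : i = s := by omega
        subst this
        intro h
        rw [h, Polynomial.natDegree_zero] at hAs
        omega
      · intro h
        have h2 := ih k (by omega) (i + 2) (by omega) (by omega)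
        apply h2
        rw [hrec i (by omega) (by omega), h, EuclideanDomain.zero_mod]
  have hAne : ∀ i, 1 ≤ i → i ≤ s + 1 → A i ≠ 0 := fun i h1 h2 =>
    hAneK (s + 1 - i) i h1 (by omega)
  -- degrees strictly decrease along the chain
  have hdeg : ∀ i, 1 ≤ i → i ≤ s → (A (i + 1)).degree < (A i).degree := by
    intro i h1 h2
    rcases eq_or_lt_of_le h1 with h | h
    · subst h
      simpa using hd2
    · have heq : A (i + 1) = A (i - 1) % A i := by
        have h3 := hrec (i - 1) (by omega) (by omega)
        have h4 : i - 1 + 2 = i + 1 := by omega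
        have h5 : i - 1 + 1 = i := by omega
        rw [h4, h5] at h3
        exact h3
      rw [heq]
      exact EuclideanDomain.mod_lt _ (hAne i h1 (by omega))
  have hndeg : ∀ i, 1 ≤ i → i ≤ s → (A (i + 1)).natDegree < (A i).natDegree := fun i h1 h2 =>
    Polynomial.natDegree_lt_natDegree (hAne (i + 1) (by omega) (by omega)) (hdeg i h1 h2)
  have hmono : ∀ i j, 1 ≤ i → i ≤ j → j ≤ s + 1 → (A j).natDegree ≤ (A i).natDegree := by
    intro i j h1
    induction j with
    | zero => intro h _; omega
    | succ j ihj =>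
      intro hij hjs
      rcases Nat.lt_or_ge i (j + 1) with h | h
      · exact le_trans (le_of_lt (hndeg j (by omega) (by omega))) (ihj (by omega) (by omega))
      · have h' : i = j + 1 := by omega
        rw [h']
  -- quotient facts
  have hQfact : ∀ i, 1 ≤ i → i ≤ s - 1 → (A i / A (i + 1)) ≠ 0 ∧
      (A i / A (i + 1)).natDegree + (A (i + 1)).natDegree = (A i).natDegree := by
    intro i h1 h2
    have hne1 : A (i + 1) ≠ 0 := hAne (i + 1) (by omega) (by omega)
    have hlt : (A (i + 1)).degree < (A i).degree := hdeg i h1 (by omega)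
    have hne0 : A i ≠ 0 := hAne i h1 (by omega)
    have hq0 : A i / A (i + 1) ≠ 0 := by
      rw [Ne, Polynomial.div_eq_zero_iff hne1]
      exact not_lt.mpr hlt.le
    refine ⟨hq0, ?_⟩
    have hda := Polynomial.degree_add_div hne1 hlt.le
    rw [Polynomial.degree_eq_natDegree hne1, Polynomial.degree_eq_natDegree hq0,
      Polynomial.degree_eq_natDegree hne0] at hda
    have hda' : (A (i + 1)).natDegree + (A i / A (i + 1)).natDegree = (A i).natDegree := by
      exact_mod_cast hda
    omega
  -- subtraction degree helper
  have hsub : ∀ p q : Polynomial F, q ≠ 0 → p.natDegree < q.natDegree →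
      (p - q) ≠ 0 ∧ (p - q).natDegree = q.natDegree := by
    intro p q hq h
    have hdq : p.degree < q.degree :=
      lt_of_le_of_lt Polynomial.degree_le_natDegree
        (by rw [Polynomial.degree_eq_natDegree hq]; exact_mod_cast h)
    have he := Polynomial.degree_sub_eq_right_of_degree_lt hdq
    constructor
    · intro h0
      rw [h0, Polynomial.degree_zero] at he
      exact hq (Polynomial.degree_eq_bot.mp he.symm)
    · exact Polynomial.natDegree_eq_of_degree_eq he
  have hA2ne : A 2 ≠ 0 := hAne 2 (by omega) (by omega)
  have hA2lt : (A 2).natDegree < r := by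
    have := Polynomial.natDegree_lt_natDegree hA2ne hd2
    omega
  -- main Bezout invariant along the Euclidean chain
  have hPhi : ∀ i, 2 ≤ i → i ≤ s → ∃ U W U' W' : Polynomial F,
      A i = U * A 1 + W * A 2 ∧ A (i + 1) = U' * A 1 + W' * A 2 ∧
      W ≠ 0 ∧ W' ≠ 0 ∧
      W.natDegree + (A (i - 1)).natDegree = r ∧
      W'.natDegree + (A i).natDegree = r ∧
      (U = 0 ∨ U.natDegree + (A (i - 1)).natDegree ≤ (A 2).natDegree) ∧
      U'.natDegree + (A i).natDegree ≤ (A 2).natDegree := by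
    intro i hi
    induction i, hi using Nat.le_induction with
    | base =>
      intro _
      have hq := hQfact 1 le_rfl (by omega)
      have h11 : (1 : ℕ) + 1 = 2 := rfl
      rw [h11] at hq
      have hA3 : A 3 = A 1 - A 2 * (A 1 / A 2) := by
        have h := hrec 1 le_rfl (by omega)
        have h2 := EuclideanDomain.div_add_mod (A 1) (A 2)
        rw [show (1 : ℕ) + 2 = 3 from rfl, show (1 : ℕ) + 1 = 2 from rfl] at h
        rw [h]
        linear_combination h2
      refine ⟨0, 1, 1, -(A 1 / A 2), by ring, ?_, one_ne_zero, neg_ne_zero.mpr hq.1, ?_, ?_,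
        Or.inl rfl, ?_⟩
      · rw [show (2 : ℕ) + 1 = 3 from rfl, hA3]; ring
      · rw [show (2 : ℕ) - 1 = 1 from rfl, Polynomial.natDegree_one, hd1, zero_add]
      · rw [Polynomial.natDegree_neg]
        omega
      · rw [Polynomial.natDegree_one]
        omega
    | succ i hi2 ih =>
      intro his
      obtain ⟨U, W, U', W', hB1, hB2, hW, hW', hdW, hdW', hU, hdU'⟩ := ih (by omega)
      have hq := hQfact i (by omega) (by omega)
      have hA3 : A (i + 2) = A i - A (i + 1) * (A i / A (i + 1)) := by
        rw [hrec i (by omega) (by omega)]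
        linear_combination EuclideanDomain.div_add_mod (A i) (A (i + 1))
      have hQW' : (A i / A (i + 1)) * W' ≠ 0 := mul_ne_zero hq.1 hW'
      have hdQW' : ((A i / A (i + 1)) * W').natDegree = (A i / A (i + 1)).natDegree + W'.natDegree :=
        Polynomial.natDegree_mul hq.1 hW'
      have hstep : (A (i + 1)).natDegree < (A (i - 1)).natDegree := by
        have h1 := hndeg i (by omega) (by omega)
        have h2 := hndeg (i - 1) (by omega) (by omega)
        have h3 : i - 1 + 1 = i := by omega
        rw [h3] at h2
        omega
      have hWlt : W.natDegree < ((A i / A (i + 1)) * W').natDegree := by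
        rw [hdQW']
        omega
      obtain ⟨hW''ne, hW''deg⟩ := hsub W ((A i / A (i + 1)) * W') hQW' hWlt
      have hi1 : i + 1 - 1 = i := by omega
      refine ⟨U', W', U - (A i / A (i + 1)) * U', W - (A i / A (i + 1)) * W', hB2, ?_, hW',
        hW''ne, ?_, ?_, ?_, ?_⟩
      · rw [show i + 1 + 1 = i + 2 from rfl, hA3, hB1, hB2]; ring
      · rw [hi1]; exact hdW'
      · rw [hW''deg, hdQW']; omega
      · right; rw [hi1]; exact hdU'
      · have hb : (U - (A i / A (i + 1)) * U').natDegree ≤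
            max U.natDegree ((A i / A (i + 1)) * U').natDegree :=
          Polynomial.natDegree_sub_le _ _
        have hmul : ((A i / A (i + 1)) * U').natDegree ≤
            (A i / A (i + 1)).natDegree + U'.natDegree := Polynomial.natDegree_mul_le
        have key : U.natDegree + (A (i + 1)).natDegree ≤ (A 2).natDegree := by
          rcases hU with h0 | hUb
          · rw [h0, Polynomial.natDegree_zero]
            simpa using hmono 2 (i + 1) (by omega) (by omega) (by omega)
          · omega
        have key2 : ((A i / A (i + 1)) * U').natDegree + (A (i + 1)).natDegree ≤
            (A 2).natDegree := by omega
        have hmax : max U.natDegree ((A i / A (i + 1)) * U').natDegree + (A (i + 1)).natDegree ≤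
            (A 2).natDegree := by
          rcases max_choice U.natDegree ((A i / A (i + 1)) * U').natDegree with h | h <;> rw [h]
          · exact key
          · exact key2
        omega
  -- extract Bezout data for A (s+1)
  obtain ⟨U₀, W₀, U, W, hB₀, hBez, hW₀, hWne, hdW₀, hdW, hU₀, hdU⟩ := hPhi s hs le_rfl
  set d := (A s).natDegree with hddef
  have hdles : d ≤ (A 2).natDegree := hmono 2 s (by omega) hs (by omega)
  -- A (s+1) is a nonzero constant
  have hAs1 : A (s + 1) = Polynomial.C ((A (s + 1)).coeff 0) :=
    Polynomial.eq_C_of_degree_le_zero hlast.le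
  set c := (A (s + 1)).coeff 0 with hcdef
  have hcne : c ≠ 0 := by
    intro h
    have h0 : A (s + 1) = 0 := by rw [hAs1, h, map_zero]
    rw [h0, Polynomial.degree_zero] at hlast
    simp at hlast
  have hnds1 : (A (s + 1)).natDegree = 0 := by
    rw [hAs1]; exact Polynomial.natDegree_C _
  -- kernel description for l = 1, m = n + 1
  have hker := hchar 1 (n + 1) le_rfl (by omega) (by omega)
  have hmv : ∀ v : Fin (n + 1) → F,
      (hankel F 1 (n + 1) α).mulVec v = 0 ↔ ∑ j : Fin (n + 1), α j.1 * v j = 0 := by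
    intro v
    constructor
    · intro h
      have h0 := congrFun h 0
      simpa [Matrix.mulVec, dotProduct, hankel] using h0
    · intro h
      funext i
      have h0 : i = 0 := Subsingleton.elim _ _
      subst h0
      simpa [Matrix.mulVec, dotProduct, hankel] using h
  have hsumX : ∀ j0 : ℕ, j0 ≤ n → ∀ P : Polynomial F, P = X ^ j0 →
      (∑ i : Fin (n + 1), α i.1 * P.coeff i.1) = α j0 := by
    intro j0 hj0 P hP
    subst hP
    rw [Finset.sum_eq_single (⟨j0, by omega⟩ : Fin (n + 1))]
    · simp [Polynomial.coeff_X_pow]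
    · intro b _ hb
      have hbne : (b : ℕ) ≠ j0 := by
        intro h
        exact hb (Fin.ext h)
      simp [Polynomial.coeff_X_pow, hbne]
    · intro h
      exact absurd (Finset.mem_univ _) h
  -- forward part: α j0 = 0 for j0 < d - 1
  have hzero : ∀ j0 : ℕ, j0 < d - 1 → α j0 = 0 := by
    intro j0 hj0
    have hj0' : j0 + 2 ≤ d := by omega
    have hPX : (Polynomial.C c⁻¹ * X ^ j0 * U) * A 1 + (Polynomial.C c⁻¹ * X ^ j0 * W) * A 2
        = X ^ j0 := by
      have h1 : (Polynomial.C c⁻¹ * X ^ j0 * U) * A 1 + (Polynomial.C c⁻¹ * X ^ j0 * W) * A 2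
          = Polynomial.C c⁻¹ * X ^ j0 * (U * A 1 + W * A 2) := by ring
      rw [h1, ← hBez, hAs1, mul_comm (Polynomial.C c⁻¹ * X ^ j0) (Polynomial.C c), ← mul_assoc,
        ← Polynomial.C_mul, mul_inv_cancel₀ hcne, Polynomial.C_1, one_mul]
    have hndB₁ : (Polynomial.C c⁻¹ * X ^ j0 * U).natDegree ≤ j0 + U.natDegree := by
      calc (Polynomial.C c⁻¹ * X ^ j0 * U).natDegree
          ≤ (Polynomial.C c⁻¹ * X ^ j0).natDegree + U.natDegree := Polynomial.natDegree_mul_le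
        _ ≤ ((Polynomial.C c⁻¹).natDegree + (X ^ j0 : Polynomial F).natDegree) + U.natDegree :=
            Nat.add_le_add_right Polynomial.natDegree_mul_le _
        _ = j0 + U.natDegree := by
            rw [Polynomial.natDegree_C, Polynomial.natDegree_X_pow, zero_add]
    have hndB₂ : (Polynomial.C c⁻¹ * X ^ j0 * W).natDegree ≤ j0 + W.natDegree := by
      calc (Polynomial.C c⁻¹ * X ^ j0 * W).natDegree
          ≤ (Polynomial.C c⁻¹ * X ^ j0).natDegree + W.natDegree := Polynomial.natDegree_mul_le
        _ ≤ ((Polynomial.C c⁻¹).natDegree + (X ^ j0 : Polynomial F).natDegree) + W.natDegree :=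
            Nat.add_le_add_right Polynomial.natDegree_mul_le _
        _ = j0 + W.natDegree := by
            rw [Polynomial.natDegree_C, Polynomial.natDegree_X_pow, zero_add]
    have hB₁d : degLE F (Polynomial.C c⁻¹ * X ^ j0 * U) (((n + 1 : ℕ) : ℤ) - r - 1) := by
      apply degLE_of_natDegree_le
      omega
    have hB₂d : degLE F (Polynomial.C c⁻¹ * X ^ j0 * W)
        (((n + 1 : ℕ) : ℤ) - ((n : ℤ) + 2 - r) - 1) := by
      apply degLE_of_natDegree_le
      omega
    have hmem : (fun i : Fin (n + 1) =>
        ((Polynomial.C c⁻¹ * X ^ j0 * U) * A 1 + (Polynomial.C c⁻¹ * X ^ j0 * W) * A 2).coeff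
          (i : ℕ)) ∈ {v : Fin (n + 1) → F | (hankel F 1 (n + 1) α).mulVec v = 0} := by
      rw [hker]
      exact ⟨_, _, hB₁d, hB₂d, rfl⟩
    have h0 : ∑ i : Fin (n + 1), α i.1 *
        ((Polynomial.C c⁻¹ * X ^ j0 * U) * A 1 + (Polynomial.C c⁻¹ * X ^ j0 * W) * A 2).coeff i.1
        = 0 := (hmv _).mp hmem
    have hj0n : j0 ≤ n := by omega
    rw [hsumX j0 hj0n _ hPX] at h0
    exact h0
  refine ⟨hzero, ?_⟩
  -- backward part: α (d - 1) ≠ 0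
  intro hα
  have hdn : d - 1 ≤ n := by omega
  have hmem : (fun i : Fin (n + 1) => (X ^ (d - 1) : Polynomial F).coeff (i : ℕ)) ∈
      {v : Fin (n + 1) → F | (hankel F 1 (n + 1) α).mulVec v = 0} := by
    apply (hmv _).mpr
    rw [hsumX (d - 1) hdn _ rfl]
    exact hα
  rw [hker] at hmem
  obtain ⟨B₁, B₂, hB₁d, hB₂d, hv⟩ := hmem
  have hB₁nd : B₁.natDegree ≤ n - r := by
    have h1 := natDegree_le_of_degLE F B₁ _ (by push_cast; omega) hB₁d
    omega
  have hB₂nd : B₂.natDegree ≤ r - 2 := by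
    have h1 := natDegree_le_of_degLE F B₂ _ (by push_cast; omega) hB₂d
    omega
  have hPnd : (B₁ * A 1 + B₂ * A 2).natDegree ≤ n := by
    apply le_trans (Polynomial.natDegree_add_le _ _)
    have h1 : (B₁ * A 1).natDegree ≤ B₁.natDegree + r := by
      have := Polynomial.natDegree_mul_le (p := B₁) (q := A 1)
      omega
    have h2 : (B₂ * A 2).natDegree ≤ B₂.natDegree + (A 2).natDegree :=
      Polynomial.natDegree_mul_le
    simp only [max_le_iff]
    omega
  have hPX : B₁ * A 1 + B₂ * A 2 = X ^ (d - 1) := by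
    ext k
    rcases Nat.lt_or_ge k (n + 1) with hk | hk
    · exact (congrFun hv ⟨k, hk⟩).symm
    · rw [Polynomial.coeff_eq_zero_of_natDegree_lt (lt_of_le_of_lt hPnd (by omega)),
        Polynomial.coeff_X_pow]
      have hkne : k ≠ d - 1 := by omega
      simp [hkne]
  have hkey : B₂ * A (s + 1) - W * X ^ (d - 1) = (B₂ * U - W * B₁) * A 1 := by
    linear_combination B₂ * hBez + W * hPX
  have hG : B₂ * U - W * B₁ = 0 := by
    by_contra hG
    have hA1d : ((B₂ * U - W * B₁) * A 1).natDegree = (B₂ * U - W * B₁).natDegree + r := by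
      rw [Polynomial.natDegree_mul hG hA1ne, hd1]
    have hL : (B₂ * A (s + 1) - W * X ^ (d - 1)).natDegree ≤ r - 1 := by
      apply le_trans (Polynomial.natDegree_sub_le _ _)
      have h1 : (B₂ * A (s + 1)).natDegree ≤ B₂.natDegree + (A (s + 1)).natDegree :=
        Polynomial.natDegree_mul_le
      have h2 : (W * X ^ (d - 1)).natDegree ≤ W.natDegree + (d - 1) := by
        have := Polynomial.natDegree_mul_le (p := W) (q := (X ^ (d - 1) : Polynomial F))
        rw [Polynomial.natDegree_X_pow] at this
        omega
      simp only [max_le_iff]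
      omega
    rw [hkey] at hL
    omega
  have hfin : B₂ * A (s + 1) = W * X ^ (d - 1) := by
    have h1 := hkey
    rw [hG, zero_mul] at h1
    exact sub_eq_zero.mp h1
  have hrhs_ne : W * (X ^ (d - 1) : Polynomial F) ≠ 0 :=
    mul_ne_zero hWne (pow_ne_zero _ Polynomial.X_ne_zero)
  have hB₂ne : B₂ ≠ 0 := by
    intro h
    rw [h, zero_mul] at hfin
    exact hrhs_ne hfin.symm
  have hCne : Polynomial.C c ≠ 0 := Polynomial.C_ne_zero.mpr hcne
  have hld : (B₂ * A (s + 1)).natDegree = B₂.natDegree := by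
    rw [hAs1, Polynomial.natDegree_mul hB₂ne hCne, Polynomial.natDegree_C, add_zero]
  have hrd : (W * (X ^ (d - 1) : Polynomial F)).natDegree = W.natDegree + (d - 1) := by
    rw [Polynomial.natDegree_mul hWne (pow_ne_zero _ Polynomial.X_ne_zero),
      Polynomial.natDegree_X_pow]
  rw [hfin, hrd] at hld
  omega
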